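/- If G is a group with a limiting sequence pair, then G is lcH-slender: every group homomorphism from a locally compact Hausdorff topological group to G has open kernel. -/

import Mathlib

universe u

def IsLimitingSequencePair {G : Type*} [Group G] (F : ℕ → Set G) (k : ℕ → ℕ) : Prop :=
  Monotone F ∧
  (∀ (n : ℕ) (g : G), ∃ m : ℕ, (fun x => g * x) '' F n ⊆ F m) ∧
  (∀ n : ℕ, {g : G | g ^ k n ∈ F n} = {1}) ∧
  (∀ m n : ℕ, m ≤ n → {g : G | g ^ k m ∈ F n} ⊆ F n)

/-- A group `G` is lcH-slender if every group homomorphism from a locally compact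
Hausdorff topological group to `G` has open kernel. -/
def IsLCHSlender (G : Type*) [Group G] : Prop :=
  ∀ (H : Type u) [Group H] [TopologicalSpace H] [IsTopologicalGroup H]
    [LocallyCompactSpace H] [T2Space H],
    ∀ φ : H →* G, IsOpen ((φ : H → G) ⁻¹' {1})

section Aux

open Filter Topology Set

/-- The iterated translation bound. -/
def LSPBfun {G : Type*} [Group G] (τ : G → ℕ → ℕ) (a : ℕ → G) (N : ℕ) : ℕ → ℕ
  | 0 => N
  | j + 1 => τ (a j)⁻¹ (LSPBfun τ a N j)

lemma LSPBfun_congr {G : Type*} [Group G] (τ : G → ℕ → ℕ) {a b : ℕ → G} (N : ℕ) (j : ℕ)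
    (h : ∀ i < j, a i = b i) : LSPBfun τ a N j = LSPBfun τ b N j := by
  induction j with
  | zero => rfl
  | succ j ih =>
    simp only [LSPBfun]
    rw [ih (fun i hi => h i (hi.trans (Nat.lt_succ_self j))), h j (Nat.lt_succ_self j)]

/-- Dependent choice producing a sequence with local properties and step relations. -/
lemma LSP_dep_choice {β : ℕ → Sort*} (P : ∀ n, β n → Prop) (R : ∀ n, β n → β (n + 1) → Prop)
    (h0 : ∃ b : β 0, P 0 b)
    (hstep : ∀ n (b : β n), P n b → ∃ b' : β (n + 1), P (n + 1) b' ∧ R n b b') :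
    ∃ f : ∀ n, β n, (∀ n, P n (f n)) ∧ ∀ n, R n (f n) (f (n + 1)) := by
  let f : ∀ n, {b : β n // P n b} := fun n =>
    Nat.rec ⟨h0.choose, h0.choose_spec⟩
      (fun n b => ⟨(hstep n b.1 b.2).choose, (hstep n b.1 b.2).choose_spec.1⟩) n
  exact ⟨fun n => (f n).1, fun n => (f n).2,
    fun n => (hstep n (f n).1 (f n).2).choose_spec.2⟩

/-- The combinatorial heart: the system `g n = a n * g (n+1) ^ k (c n)` with all `a n ≠ 1`
is unsolvable when the exponents are chosen large enough. -/
lemma LSP_keyG {G : Type*} [Group G] (F : ℕ → Set G) (k : ℕ → ℕ) (τ : G → ℕ → ℕ)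
    (hmono : Monotone F)
    (hτ : ∀ (g : G) (n : ℕ), ∀ y ∈ F n, g * y ∈ F (τ g n))
    (hpow : ∀ n : ℕ, {g : G | g ^ k n ∈ F n} = {1})
    (hroot : ∀ m n : ℕ, m ≤ n → {g : G | g ^ k m ∈ F n} ⊆ F n)
    (a : ℕ → G) (c : ℕ → ℕ) (g : ℕ → G) (N : ℕ)
    (hg0 : g 0 ∈ F N)
    (hrel : ∀ n, g n = a n * g (n + 1) ^ k (c n))
    (ha : ∀ n, a n ≠ 1)
    (hcs : ∀ n, (a n)⁻¹ ∈ F (c n))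
    (hcB : ∀ n N', N' ≤ n → LSPBfun τ a N' (n + 1) ≤ c n) : False := by
  have hmem : ∀ n x, x ∈ {g : G | g ^ k n ∈ F n} → x = (1 : G) := by
    intro n x hx
    have := (hpow n) ▸ hx
    simpa using this
  have hstep : ∀ j, g j ∈ F (LSPBfun τ a N j) →
      g (j + 1) ^ k (c j) ∈ F (LSPBfun τ a N (j + 1)) := by
    intro j hj
    have e : g (j + 1) ^ k (c j) = (a j)⁻¹ * g j := by
      rw [hrel j]; group
    rw [e]
    exact hτ _ _ _ hj
  have key : ∀ j, (∃ i, g (i + 1) = 1) ∨ g j ∈ F (LSPBfun τ a N j) := by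
    intro j
    induction j with
    | zero => exact Or.inr hg0
    | succ j ih =>
      rcases ih with h | h
      · exact Or.inl h
      · have h2 := hstep j h
        rcases le_or_gt (c j) (LSPBfun τ a N (j + 1)) with hle | hlt
        · exact Or.inr (hroot (c j) _ hle h2)
        · refine Or.inl ⟨j, hmem (c j) _ ?_⟩
          exact hmono hlt.le h2
  have hex : ∃ i, g (i + 1) = 1 := by
    rcases key N with h | h
    · exact h
    · refine ⟨N, hmem (c N) _ ?_⟩
      exact hmono (hcB N N le_rfl) (hstep N h)
  obtain ⟨i, hi⟩ := hex
  have h3 : g (i + 2) ^ k (c (i + 1)) = (a (i + 1))⁻¹ := by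
    have := hrel (i + 1)
    rw [hi] at this
    exact (eq_inv_of_mul_eq_one_right this.symm)
  have h4 : g (i + 2) = 1 := by
    refine hmem (c (i + 1)) _ ?_
    show g (i + 2) ^ k (c (i + 1)) ∈ F (c (i + 1))
    rw [h3]; exact hcs (i + 1)
  have : (a (i + 1))⁻¹ = 1 := by rw [← h3, h4, one_pow]
  exact ha (i + 1) (by simpa [inv_eq_one] using this)

/-- Passing a cluster point backwards through a continuous map, inside a compact set. -/
lemma LSP_cluster_step {H : Type*} [TopologicalSpace H] [T2Space H] {K : Set H}
    (hK : IsCompact K) (f : H → H) (hf : Continuous f) (s : ℕ → H) (hs : ∀ j, s j ∈ K)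
    {y : H} (hy : ClusterPt y (Filter.map (fun j => f (s j)) Filter.atTop)) :
    ∃ z, ClusterPt z (Filter.map s Filter.atTop) ∧ f z = y := by
  set L := Filter.map s Filter.atTop ⊓ Filter.comap f (𝓝 y) with hL
  have hmapL : Filter.map f L = Filter.map (fun j => f (s j)) Filter.atTop ⊓ 𝓝 y := by
    rw [hL, Filter.push_pull, Filter.map_map]
    rfl
  have hLne : L.NeBot := by
    apply Filter.NeBot.of_map (m := f)
    rw [hmapL]
    have := hy.neBot
    exact this.mono (le_of_eq (inf_comm _ _))
  have hLK : L ≤ 𝓟 K := le_trans inf_le_left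
    (Filter.le_principal_iff.2 (Filter.mem_map.2 (Filter.univ_mem' hs)))
  obtain ⟨z, hzK, hz⟩ := hK.exists_clusterPt hLK
  refine ⟨z, hz.mono inf_le_left, ?_⟩
  have hz2 : ClusterPt z (Filter.comap f (𝓝 y)) := hz.mono inf_le_right
  have hne : (𝓝 z ⊓ Filter.comap f (𝓝 y)).NeBot := hz2
  have : ((𝓝 z ⊓ Filter.comap f (𝓝 y)).map f).NeBot := hne.map f
  have hle : (𝓝 z ⊓ Filter.comap f (𝓝 y)).map f ≤ 𝓝 (f z) ⊓ 𝓝 y := by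
    refine le_inf ?_ ?_
    · exact le_trans (Filter.map_mono inf_le_left) hf.continuousAt
    · exact le_trans (Filter.map_mono inf_le_right) (Filter.map_comap_le)
  exact eq_of_nhds_neBot (this.mono hle)

end Aux

section Aux2

open Filter Topology Set Pointwise

/-- The recursive construction of the sequences `x`, `c`, `V` in `H`. -/
lemma LSP_exists_seqs {H : Type*} {G : Type*} [Group H] [TopologicalSpace H]
    [IsTopologicalGroup H] [Group G]
    (φ : H →* G) (F : ℕ → Set G) (k : ℕ → ℕ) (τ : G → ℕ → ℕ) (ν : G → ℕ)
    (hmono : Monotone F) (hν : ∀ g : G, g ∈ F (ν g))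
    (hx : ∀ U ∈ 𝓝 (1 : H), ∃ x ∈ U, φ x ≠ 1)
    (V₀ : Set H) (hV₀ : V₀ ∈ 𝓝 (1 : H)) :
    ∃ (x : ℕ → H) (c : ℕ → ℕ) (V : ℕ → Set H),
      V 0 = V₀ ∧ (∀ n, V n ∈ 𝓝 (1 : H)) ∧ (∀ n, φ (x n) ≠ 1) ∧ (∀ n, x n ∈ V n) ∧
      (∀ n, (φ (x n))⁻¹ ∈ F (c n)) ∧
      (∀ n N, N ≤ n → LSPBfun τ (fun i => φ (x i)) N (n + 1) ≤ c n) ∧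
      (∀ n, V (n + 1) ⊆ V n) ∧
      (∀ n, ∀ u ∈ V (n + 1) * V (n + 1), u ^ k (c n) ∈ V n) := by
  classical
  -- one-step construction
  have main : ∀ (m : ℕ) (ah : ℕ → G) (V : Set H), V ∈ 𝓝 (1 : H) →
      ∃ (x' : H) (c' : ℕ) (V' : Set H),
        φ x' ≠ 1 ∧ x' ∈ V ∧ (φ x')⁻¹ ∈ F c' ∧
        (∀ N ≤ m, τ (φ x')⁻¹ (LSPBfun τ (Function.update ah m (φ x')) N m) ≤ c') ∧
        V' ∈ 𝓝 (1 : H) ∧ V' ⊆ V ∧ (∀ u ∈ V' * V', u ^ k c' ∈ V) := by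
    intro m ah V hV
    obtain ⟨x', hx'V, hx'ne⟩ := hx V hV
    set c' := max (ν (φ x')⁻¹)
      ((Finset.range (m + 1)).sup fun N =>
        τ (φ x')⁻¹ (LSPBfun τ (Function.update ah m (φ x')) N m)) with hc'
    have hpre : (fun u : H => u ^ k c') ⁻¹' V ∈ 𝓝 (1 : H) := by
      have h1 : V ∈ 𝓝 ((1 : H) ^ k c') := by rw [one_pow]; exact hV
      exact ((continuous_pow (k c')).continuousAt).preimage_mem_nhds h1
    obtain ⟨W, hW, hWs⟩ := exists_nhds_one_split hpre
    refine ⟨x', c', W ∩ V, hx'ne, hx'V, hmono (le_max_left _ _) (hν _), ?_,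
      Filter.inter_mem hW hV, Set.inter_subset_right, ?_⟩
    · intro N hN
      exact le_trans
        (Finset.le_sup (f := fun N =>
          τ (φ x')⁻¹ (LSPBfun τ (Function.update ah m (φ x')) N m))
          (Finset.mem_range.2 (Nat.lt_succ_of_le hN))) (le_max_right _ _)
    · intro u hu
      rw [Set.mem_mul] at hu
      obtain ⟨v, hv, w, hw, rfl⟩ := hu
      exact hWs v hv.1 w hw.1
  -- dependent choice
  obtain ⟨st, hP, hR⟩ := LSP_dep_choice (β := fun _ => (ℕ → G) × H × ℕ × Set H)
    (fun n s => φ s.2.1 ≠ 1 ∧ (φ s.2.1)⁻¹ ∈ F s.2.2.1 ∧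
      (∀ N ≤ n, τ (φ s.2.1)⁻¹ (LSPBfun τ s.1 N n) ≤ s.2.2.1) ∧
      s.1 n = φ s.2.1 ∧ s.2.2.2 ∈ 𝓝 (1 : H) ∧
      (n = 0 → s.2.1 ∈ V₀ ∧ s.2.2.2 ⊆ V₀ ∧
        ∀ u ∈ s.2.2.2 * s.2.2.2, u ^ k s.2.2.1 ∈ V₀))
    (fun n s s' => (∀ i ≤ n, s'.1 i = s.1 i) ∧ s'.2.1 ∈ s.2.2.2 ∧ s'.2.2.2 ⊆ s.2.2.2 ∧
      ∀ u ∈ s'.2.2.2 * s'.2.2.2, u ^ k s'.2.2.1 ∈ s.2.2.2)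
    (by
      obtain ⟨x', c', V', h1, h2, h3, h4, h5, h6, h7⟩ := main 0 (fun _ => 1) V₀ hV₀
      exact ⟨⟨Function.update (fun _ => 1) 0 (φ x'), x', c', V'⟩, h1, h3, h4,
        by simp, h5, fun _ => ⟨h2, h6, h7⟩⟩)
    (by
      intro n b hb
      obtain ⟨x', c', V', h1, h2, h3, h4, h5, h6, h7⟩ := main (n + 1) b.1 b.2.2.2 hb.2.2.2.2.1
      refine ⟨⟨Function.update b.1 (n + 1) (φ x'), x', c', V'⟩,
        ⟨h1, h3, h4, by simp, h5, fun hn => (Nat.succ_ne_zero n hn).elim⟩,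
        ⟨fun i hi => Function.update_of_ne (by omega) _ _, h2, h6, h7⟩⟩)
  set x : ℕ → H := fun n => (st n).2.1 with hxdef
  set c : ℕ → ℕ := fun n => (st n).2.2.1 with hcdef
  set V : ℕ → Set H := fun n => Nat.casesOn n V₀ (fun m => (st m).2.2.2) with hVdef
  have hcoh : ∀ n, ∀ i ≤ n, (st n).1 i = φ (x i) := by
    intro n
    induction n with
    | zero => intro i hi; interval_cases i; exact (hP 0).2.2.2.1
    | succ n ih =>
      intro i hi
      rcases Nat.eq_or_lt_of_le hi with h | h
      · subst h; exact (hP (n + 1)).2.2.2.1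
      · have hi' : i ≤ n := by omega
        rw [(hR n).1 i hi']; exact ih i hi'
  refine ⟨x, c, V, rfl, ?_, fun n => (hP n).1, ?_, fun n => (hP n).2.1, ?_, ?_, ?_⟩
  · intro n
    cases n with
    | zero => exact hV₀
    | succ n => exact (hP n).2.2.2.2.1
  · intro n
    cases n with
    | zero => exact ((hP 0).2.2.2.2.2 rfl).1
    | succ n => exact (hR n).2.1
  · intro n N hN
    have h1 := (hP n).2.2.1 N hN
    have h2 : LSPBfun τ (st n).1 N n = LSPBfun τ (fun i => φ (x i)) N n :=
      LSPBfun_congr τ N n (fun i hi => hcoh n i hi.le)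
    show LSPBfun τ (fun i => φ (x i)) N (n + 1) ≤ c n
    simp only [LSPBfun]
    rw [← h2]
    exact h1
  · intro n
    cases n with
    | zero => exact ((hP 0).2.2.2.2.2 rfl).2.1
    | succ n => exact (hR n).2.2.1
  · intro n
    cases n with
    | zero => exact ((hP 0).2.2.2.2.2 rfl).2.2
    | succ n => exact (hR n).2.2.2

end Aux2

open Filter Topology Set Pointwise

/-- A group with a limiting sequence pair is lcH-slender. -/
theorem isLCHSlender_of_limitingSequencePair
    {G : Type*} [Group G]
    (h : ∃ (F : ℕ → Set G) (k : ℕ → ℕ), IsLimitingSequencePair F k) :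
    IsLCHSlender.{u} G := by
  obtain ⟨F, k, hmono, htrans, hpow, hroot⟩ := h
  intro H _ _ _ _ _ φ
  by_contra hno
  -- every neighborhood of 1 contains an element outside the kernel
  have hx : ∀ U ∈ 𝓝 (1 : H), ∃ x ∈ U, φ x ≠ 1 := by
    intro U hU
    by_contra hc
    push_neg at hc
    apply hno
    rw [isOpen_iff_mem_nhds]
    intro h0 hh0
    have h1 : φ h0 = 1 := by simpa using hh0
    have h2 : (h0 * ·) '' U ∈ 𝓝 h0 := by
      rw [← map_mul_left_nhds_one h0]; exact Filter.image_mem_map hU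
    refine Filter.mem_of_superset h2 ?_
    rintro y ⟨u, hu, rfl⟩
    show φ (h0 * u) ∈ ({1} : Set G)
    simp [map_mul, h1, hc u hu]
  -- translation bound and covering index
  choose τ hτ using fun (g : G) (n : ℕ) => htrans n g
  have hτ' : ∀ (g : G) (n : ℕ), ∀ y ∈ F n, g * y ∈ F (τ g n) :=
    fun g n y hy => hτ g n ⟨y, hy, rfl⟩
  have hone : ∀ n, (1 : G) ∈ F n := by
    intro n
    have h1 : (1 : G) ∈ ({1} : Set G) := rfl
    rw [← hpow n] at h1
    simpa using h1
  have hcover : ∀ g : G, ∃ m, g ∈ F m :=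
    fun g => ⟨τ g 0, by simpa using hτ' g 0 1 (hone 0)⟩
  choose ν hν using hcover
  -- compact neighborhood and its "square root"
  obtain ⟨K, hKc, hKn⟩ := exists_compact_mem_nhds (1 : H)
  obtain ⟨V₀, hV₀, hV₀K⟩ := exists_nhds_one_split hKn
  obtain ⟨x, c, V, hV0eq, hVn, hxne, hxV, hFc, hcB, hVsub, hVpow⟩ :=
    LSP_exists_seqs φ F k τ ν hmono hν hx V₀ hV₀
  -- partial products
  obtain ⟨t, ht0, htS⟩ : ∃ t : ℕ → ℕ → H, (∀ n, t 0 n = x n) ∧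
      ∀ j n, t (j + 1) n = x n * (t j (n + 1)) ^ k (c n) :=
    ⟨fun j => Nat.rec (motive := fun _ => ℕ → H) (fun n => x n)
      (fun _ tj n => x n * (tj (n + 1)) ^ k (c n)) j, fun _ => rfl, fun _ _ => rfl⟩
  have htV : ∀ j n, t j n ∈ V n * V n := by
    intro j
    induction j with
    | zero =>
      intro n
      rw [ht0 n]
      have := Set.mul_mem_mul (hxV n) (mem_of_mem_nhds (hVn n) : (1 : H) ∈ V n)
      simpa using this
    | succ j ih =>
      intro n
      rw [htS j n]
      exact Set.mul_mem_mul (hxV n) (hVpow n _ (ih (n + 1)))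
  have hVV₀ : ∀ n, V n ⊆ V₀ := by
    intro n
    induction n with
    | zero => rw [hV0eq]
    | succ n ih => exact (hVsub n).trans ih
  have htK : ∀ j n, t j n ∈ K := by
    intro j n
    have := htV j n
    rw [Set.mem_mul] at this
    obtain ⟨v, hv, w, hw, he⟩ := this
    rw [← he]
    exact hV₀K v (hVV₀ n hv) w (hVV₀ n hw)
  -- cluster point recursion
  have clEx : ∀ (n : ℕ) (y : H), ClusterPt y (Filter.map (fun j => t j n) Filter.atTop) →
      ∃ z, ClusterPt z (Filter.map (fun j => t j (n + 1)) Filter.atTop) ∧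
        y = x n * z ^ k (c n) := by
    intro n y hy
    have e3 : (fun j => x n * (t j (n + 1)) ^ k (c n)) = fun j => t (j + 1) n :=
      funext fun j => (htS j n).symm
    have hshift : ClusterPt y
        (Filter.map (fun j => x n * (t j (n + 1)) ^ k (c n)) Filter.atTop) := by
      have e1 : (fun j => t (j + 1) n) = (fun j => t j n) ∘ (fun j => j + 1) := rfl
      rw [e3, e1, ← Filter.map_map, Filter.map_add_atTop_eq_nat]
      exact hy
    obtain ⟨z, hzc, hzf⟩ := LSP_cluster_step hKc (fun u => x n * u ^ k (c n))
      (continuous_const.mul (continuous_pow _)) (fun j => t j (n + 1))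
      (fun j => htK j (n + 1)) hshift
    exact ⟨z, hzc, hzf.symm⟩
  have hle : Filter.map (fun j => t j 0) Filter.atTop ≤ 𝓟 K :=
    Filter.le_principal_iff.2 (Filter.mem_map.2 (Filter.univ_mem' fun j => htK j 0))
  obtain ⟨y₀, _, hy₀⟩ := hKc.exists_clusterPt hle
  obtain ⟨y, hyP, hyR⟩ := LSP_dep_choice (β := fun _ => H)
    (fun n p => ClusterPt p (Filter.map (fun j => t j n) Filter.atTop))
    (fun n p p' => p = x n * p' ^ k (c n))
    ⟨y₀, hy₀⟩
    (fun n p hp => clEx n p hp)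
  -- transfer to G and conclude
  have hgrel : ∀ n, φ (y n) = φ (x n) * φ (y (n + 1)) ^ k (c n) := by
    intro n
    rw [hyR n, map_mul, map_pow]
  exact LSP_keyG F k τ hmono hτ' hpow hroot (fun n => φ (x n)) c (fun n => φ (y n))
    (ν (φ (y 0))) (hν _) hgrel hxne hFc hcB
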